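/- Let A be a commutative ring and let f, g ∈ A⟦t⟧ be formal power series with zero constant coefficient, with coefficients f_k = coeff_k f and g_k = coeff_k g. Then for every n ≥ 1, the n-th coefficient of the composition f ∘ g (substitution of g into f) equals Σ_{m=1}^{n} Σ (m!/(k_1!·k_2!···k_n!)) · f_m · g_1^{k_1} · g_2^{k_2} ··· g_n^{k_n}, where the inner sum runs over all tuples (k_1,…,k_n) of non-negative integers with k_1 + ⋯ + k_n = m and k_1 + 2k_2 + ⋯ + n·k_n = n. -/

import Mathlib

open scoped Nat

section Aux
open Finset PowerSeries

variable {A : Type*} [CommRing A]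

lemma sum_Icc_one_eq_sum_fin {M : Type*} [AddCommMonoid M] (n : ℕ) (F : ℕ → M) :
    ∑ j ∈ Finset.Icc 1 n, F j = ∑ i : Fin n, F (i.1 + 1) := by
  rw [show Finset.Icc 1 n = Finset.Ico 1 (n + 1) by rfl, Finset.sum_Ico_eq_sum_range,
    Fin.sum_univ_eq_sum_range (fun i => F (i + 1))]
  simp [add_comm 1]

lemma coeff_pow_trunc (g : PowerSeries A) (hg : PowerSeries.constantCoeff g = 0)
    (n m : ℕ) (hn : 1 ≤ n) :
    PowerSeries.coeff n (g ^ m) =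
      ∑ k ∈ (Finset.piAntidiag (Finset.Icc 1 n) m).filter
          (fun k => ∑ j ∈ Finset.Icc 1 n, j * k j = n),
        (Nat.multinomial (Finset.Icc 1 n) k : A) *
          ∏ j ∈ Finset.Icc 1 n, (PowerSeries.coeff j g) ^ (k j) := by
  set h : PowerSeries A := ∑ j ∈ Finset.Icc 1 n, PowerSeries.C (PowerSeries.coeff j g) * X ^ j
    with hh
  have hcoeffh : ∀ p, p ≤ n → PowerSeries.coeff p h = PowerSeries.coeff p g := by
    intro p hp
    rw [hh, map_sum]
    simp only [PowerSeries.coeff_C_mul, PowerSeries.coeff_X_pow, mul_ite, mul_one, mul_zero]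
    rw [Finset.sum_ite_eq (Finset.Icc 1 n) p (fun j => PowerSeries.coeff j g)]
    by_cases hp1 : 1 ≤ p
    · simp [Finset.mem_Icc, hp1, hp]
    · have hp0 : p = 0 := by omega
      subst hp0
      rw [if_neg (by simp)]
      rw [PowerSeries.coeff_zero_eq_constantCoeff_apply, hg]
  have hdvd : (X : PowerSeries A) ^ (n + 1) ∣ g ^ m - h ^ m := by
    refine dvd_trans ?_ (sub_dvd_pow_sub_pow g h m)
    rw [PowerSeries.X_pow_dvd_iff]
    intro p hp
    rw [map_sub, hcoeffh p (by omega), sub_self]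
  have hcoeq : PowerSeries.coeff n (g ^ m) = PowerSeries.coeff n (h ^ m) := by
    have := (PowerSeries.X_pow_dvd_iff.mp hdvd) n (by omega)
    rw [map_sub] at this
    exact sub_eq_zero.mp this
  rw [hcoeq, hh, Finset.sum_pow_eq_sum_piAntidiag, map_sum, Finset.sum_filter]
  refine Finset.sum_congr rfl fun k hk => ?_
  have key : ∏ j ∈ Finset.Icc 1 n, (PowerSeries.C (PowerSeries.coeff j g) * X ^ j) ^ k j
      = PowerSeries.C (∏ j ∈ Finset.Icc 1 n, (PowerSeries.coeff j g) ^ k j)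
        * X ^ (∑ j ∈ Finset.Icc 1 n, j * k j) := by
    calc ∏ j ∈ Finset.Icc 1 n, (PowerSeries.C (PowerSeries.coeff j g) * X ^ j) ^ k j
        = ∏ j ∈ Finset.Icc 1 n,
            (PowerSeries.C ((PowerSeries.coeff j g) ^ k j) * X ^ (j * k j)) :=
          Finset.prod_congr rfl fun j _ => by rw [mul_pow, map_pow, ← pow_mul]
      _ = (∏ j ∈ Finset.Icc 1 n, PowerSeries.C ((PowerSeries.coeff j g) ^ k j))
            * ∏ j ∈ Finset.Icc 1 n, (X : PowerSeries A) ^ (j * k j) := Finset.prod_mul_distrib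
      _ = _ := by rw [← map_prod, Finset.prod_pow_eq_pow_sum]
  rw [key]
  have hcast : ((Nat.multinomial (Finset.Icc 1 n) k : ℕ) : PowerSeries A)
      = PowerSeries.C ((Nat.multinomial (Finset.Icc 1 n) k : ℕ) : A) := by simp
  rw [hcast, ← mul_assoc, ← map_mul, PowerSeries.coeff_C_mul, PowerSeries.coeff_X_pow]
  by_cases hs : ∑ j ∈ Finset.Icc 1 n, j * k j = n
  · simp [hs]
  · rw [if_neg hs, if_neg (fun h' => hs h'.symm), mul_zero]

lemma prod_Icc_one_eq_prod_fin {M : Type*} [CommMonoid M] (n : ℕ) (F : ℕ → M) :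
    ∏ j ∈ Finset.Icc 1 n, F j = ∏ i : Fin n, F (i.1 + 1) := by
  rw [show Finset.Icc 1 n = Finset.Ico 1 (n + 1) by rfl, Finset.prod_Ico_eq_prod_range,
    Fin.prod_univ_eq_prod_range (fun i => F (i + 1))]
  simp [add_comm 1]

end Aux

/-- Composition (substitution) of formal power series: `psComp f g` is the
series obtained by substituting `g` into `f`, defined coefficientwise by
`coeff n (f ∘ g) = ∑_{m ≤ n} f_m · coeff n (gᵐ)`. When `g` has zero constant
coefficient this is the usual substitution. -/
noncomputable def psComp {A : Type*} [CommRing A] (f g : PowerSeries A) :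
    PowerSeries A :=
  PowerSeries.mk fun n : ℕ =>
    ∑ m ∈ Finset.range (n + 1),
      PowerSeries.coeff m f * PowerSeries.coeff n (g ^ m)

/-- **Faà di Bruno's formula for formal power series.** If `f, g ∈ A⟦t⟧` have
zero constant coefficient, then for `n ≥ 1` the `n`-th coefficient of the
composition `f ∘ g` is
`∑_{m=1}^n ∑ (m!/(k₁!⋯kₙ!)) f_m g₁^{k₁} ⋯ gₙ^{kₙ}`, the inner sum over
tuples `(k₁,…,kₙ)` with `∑ kᵢ = m` and `∑ i·kᵢ = n` (all such tuples have
`kᵢ ≤ n`, hence lie in the finite box used below; the multinomial coefficient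
`m!/(k₁!⋯kₙ!)` is a natural number; `k i` stands for `k_{i+1}`). -/
theorem coeff_psComp_faa_di_bruno {A : Type*} [CommRing A]
    (f g : PowerSeries A)
    (hf : PowerSeries.constantCoeff f = 0)
    (hg : PowerSeries.constantCoeff g = 0)
    (n : ℕ) (hn : 1 ≤ n) :
    PowerSeries.coeff n (psComp f g) =
      ∑ m ∈ Finset.Icc 1 n,
        ∑ k ∈ (Fintype.piFinset fun _ : Fin n => Finset.range (n + 1)).filter
            (fun k : Fin n → ℕ =>
              (∑ i, k i) = m ∧ (∑ i, (i.1 + 1) * k i) = n),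
          ((m ! / ∏ i : Fin n, (k i)! : ℕ) : A) * PowerSeries.coeff m f *
            ∏ i : Fin n, (PowerSeries.coeff (i.1 + 1) g) ^ (k i) := by
  rw [psComp, PowerSeries.coeff_mk]
  have hins : Finset.range (n + 1) = insert 0 (Finset.Icc 1 n) := by
    ext x; simp [Finset.mem_Icc]; omega
  conv_lhs => rw [hins]
  rw [Finset.sum_insert (by simp)]
  rw [show PowerSeries.coeff 0 f = 0 by
    rw [PowerSeries.coeff_zero_eq_constantCoeff_apply, hf], zero_mul, zero_add]
  refine Finset.sum_congr rfl fun m hm => ?_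
  rw [coeff_pow_trunc g hg n m hn, Finset.mul_sum]
  refine Finset.sum_nbij' (i := fun k => fun i : Fin n => k (i.1 + 1))
    (j := fun k' => fun j : ℕ => if h : j - 1 < n ∧ 1 ≤ j then k' ⟨j - 1, h.1⟩ else 0)
    ?_ ?_ ?_ ?_ ?_
  · intro k hk
    rw [Finset.mem_filter, Finset.mem_piAntidiag] at hk
    obtain ⟨⟨hsum, hsupp⟩, hwt⟩ := hk
    rw [Finset.mem_filter]
    refine ⟨Fintype.mem_piFinset.mpr fun i => ?_, ?_, ?_⟩
    · rw [Finset.mem_range, Nat.lt_succ_iff]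
      have h1 : (i.1 + 1) * k (i.1 + 1) ≤ n :=
        le_of_le_of_eq (Finset.single_le_sum (f := fun j => j * k j) (fun j _ => Nat.zero_le _)
          (Finset.mem_Icc.mpr ⟨by omega, i.2⟩)) hwt
      calc k (i.1 + 1) ≤ (i.1 + 1) * k (i.1 + 1) := Nat.le_mul_of_pos_left _ (by omega)
        _ ≤ n := h1
    · exact (sum_Icc_one_eq_sum_fin n k).symm.trans hsum
    · exact (sum_Icc_one_eq_sum_fin n (fun j => j * k j)).symm.trans hwt
  · intro k' hk'
    rw [Finset.mem_filter] at hk'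
    obtain ⟨_, hsum, hwt⟩ := hk'
    have hval : ∀ i : Fin n,
        (if h : (i.1 + 1) - 1 < n ∧ 1 ≤ i.1 + 1 then k' ⟨(i.1 + 1) - 1, h.1⟩ else 0) = k' i := by
      intro i
      rw [dif_pos ⟨by omega, by omega⟩]
      congr 1
    rw [Finset.mem_filter, Finset.mem_piAntidiag]
    dsimp only
    refine ⟨⟨?_, ?_⟩, ?_⟩
    · rw [sum_Icc_one_eq_sum_fin n]
      exact (Finset.sum_congr rfl fun i _ => hval i).trans hsum
    · intro j hj
      rw [Finset.mem_Icc]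
      by_contra hc
      apply hj
      rw [dif_neg (by omega)]
    · rw [sum_Icc_one_eq_sum_fin n
        (fun j => j * if h : j - 1 < n ∧ 1 ≤ j then k' ⟨j - 1, h.1⟩ else 0)]
      refine (Finset.sum_congr rfl fun i _ => ?_).trans hwt
      rw [hval i]
  · intro k hk
    rw [Finset.mem_filter, Finset.mem_piAntidiag] at hk
    funext j
    dsimp only
    by_cases hj : j - 1 < n ∧ 1 ≤ j
    · rw [dif_pos hj]
      congr 1
      omega
    · rw [dif_neg hj]
      by_contra hc
      have := hk.1.2 j (fun h => hc h.symm)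
      rw [Finset.mem_Icc] at this
      omega
  · intro k' hk'
    funext i
    dsimp only
    rw [dif_pos ⟨by omega, by omega⟩]
    congr 1
  · intro k hk
    rw [Finset.mem_filter, Finset.mem_piAntidiag] at hk
    obtain ⟨⟨hsum, hsupp⟩, hwt⟩ := hk
    have hmult : Nat.multinomial (Finset.Icc 1 n) k = m ! / ∏ i : Fin n, (k (i.1 + 1))! := by
      rw [Nat.multinomial, hsum, prod_Icc_one_eq_prod_fin n (fun j => (k j)!)]
    have hprod : ∏ j ∈ Finset.Icc 1 n, (PowerSeries.coeff j g) ^ k j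
        = ∏ i : Fin n, (PowerSeries.coeff (i.1 + 1) g) ^ k (i.1 + 1) :=
      prod_Icc_one_eq_prod_fin n _
    rw [hmult, hprod]
    ring
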